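/- Let λ > 0, let A_{k-1} be an invertible n×n real matrix with Γ_{k-1} = A_{k-1}⁻¹, let Q_k be an n×2 real matrix, D = diag(1, −1), and set A_k = λ·A_{k-1} + Q_k D Q_kᵀ. Let b_{k-1}, d_k ∈ ℝⁿ and b_k = λ·b_{k-1} + d_k. Assume the capacitance matrix S = λ·D + Q_kᵀ Γ_{k-1} Q_k is invertible and A_k is invertible. Then θ_k := A_k⁻¹ b_k satisfies θ_k = (I − Γ_{k-1} Q_k S⁻¹ Q_kᵀ) (θ_{k-1} + Γ_{k-1} d_k / λ), where θ_{k-1} = Γ_{k-1} b_{k-1} and I is the n×n identity matrix. -/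

import Mathlib

open Matrix

/-- Recursive parameter update with rank-two updates: with
`A_k = λ•A_{k-1} + Q_k D Q_kᵀ`, `b_k = λ•b_{k-1} + d_k`,
`Γ_{k-1} = A_{k-1}⁻¹` and invertible capacitance matrix
`S = λ•D + Q_kᵀ Γ_{k-1} Q_k`, the vector `θ_k = A_k⁻¹ b_k` satisfies
`θ_k = (I − Γ_{k-1} Q_k S⁻¹ Q_kᵀ)(θ_{k-1} + Γ_{k-1} d_k / λ)` where
`θ_{k-1} = Γ_{k-1} b_{k-1}`. -/
theorem parameter_rank_two_update
    (n : ℕ) (lam : ℝ) (hlam : 0 < lam)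
    (Akm Γkm : Matrix (Fin n) (Fin n) ℝ) (hAinv : IsUnit Akm) (hΓ : Γkm = Akm⁻¹)
    (Q : Matrix (Fin n) (Fin 2) ℝ)
    (D : Matrix (Fin 2) (Fin 2) ℝ) (hD : D = Matrix.diagonal ![1, -1])
    (Ak : Matrix (Fin n) (Fin n) ℝ) (hAk : Ak = lam • Akm + Q * D * Qᵀ)
    (bkm dk bk : Fin n → ℝ) (hbk : bk = lam • bkm + dk)
    (S : Matrix (Fin 2) (Fin 2) ℝ) (hS : S = lam • D + Qᵀ * Γkm * Q)
    (hSinv : IsUnit S) (hAkinv : IsUnit Ak)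
    (θk θkm : Fin n → ℝ) (hθk : θk = Ak⁻¹ *ᵥ bk) (hθkm : θkm = Γkm *ᵥ bkm) :
    θk = (1 - Γkm * Q * S⁻¹ * Qᵀ) *ᵥ (θkm + (1 / lam) • (Γkm *ᵥ dk)) := by
  have hAΓ : Akm * Γkm = 1 := by
    rw [hΓ]; exact Matrix.mul_nonsing_inv _ ((Matrix.isUnit_iff_isUnit_det _).mp hAinv)
  have hSS : S * S⁻¹ = 1 :=
    Matrix.mul_nonsing_inv _ ((Matrix.isUnit_iff_isUnit_det _).mp hSinv)
  have hDD : D * D = 1 := by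
    subst hD
    ext i j
    fin_cases i <;> fin_cases j <;>
      simp [Matrix.mul_apply, Fin.sum_univ_two, Matrix.one_apply]
  have hQΓQ : Qᵀ * Γkm * Q = S - lam • D := by rw [hS]; abel
  set M : Matrix (Fin n) (Fin n) ℝ := (1 - Γkm * Q * S⁻¹ * Qᵀ) * Γkm with hM
  have key : Ak * M = lam • (1 : Matrix (Fin n) (Fin n) ℝ) := by
    have expand : Ak * M =
        lam • (Akm * Γkm) - lam • (Akm * Γkm * (Q * S⁻¹ * Qᵀ * Γkm))
        + Q * D * (Qᵀ * Γkm) - Q * D * (Qᵀ * Γkm * Q) * S⁻¹ * (Qᵀ * Γkm) := by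
      rw [hAk, hM]
      simp only [Matrix.add_mul, Matrix.mul_add, Matrix.sub_mul, Matrix.mul_sub,
        Matrix.smul_mul, Matrix.mul_smul, Matrix.mul_one, Matrix.one_mul,
        Matrix.mul_assoc]
      abel
    rw [expand, hAΓ, hQΓQ, Matrix.one_mul]
    have : Q * D * (S - lam • D) * S⁻¹ * (Qᵀ * Γkm)
        = Q * D * (Qᵀ * Γkm) - lam • (Q * S⁻¹ * (Qᵀ * Γkm)) := by
      rw [Matrix.mul_sub, Matrix.sub_mul, Matrix.sub_mul]
      rw [Matrix.mul_assoc (Q*D) S S⁻¹, hSS, Matrix.mul_one]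
      rw [Matrix.mul_smul, Matrix.smul_mul, Matrix.smul_mul]
      rw [Matrix.mul_assoc Q D D, hDD, Matrix.mul_one]
    rw [this]
    simp only [Matrix.mul_assoc]
    abel
  have hAkM : Ak⁻¹ = (1/lam) • M := by
    apply Matrix.inv_eq_right_inv
    rw [Matrix.mul_smul, key, smul_smul]
    field_simp
    simp
  rw [hθk, hAkM, hbk, hθkm]
  have : M *ᵥ (lam • bkm + dk) = lam • (M *ᵥ bkm) + M *ᵥ dk := by
    rw [Matrix.mulVec_add, Matrix.mulVec_smul]
  rw [Matrix.smul_mulVec, this, smul_add, smul_smul]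
  rw [hM]
  rw [Matrix.mulVec_add, ← Matrix.mulVec_mulVec, Matrix.mulVec_smul,
    ← Matrix.mulVec_mulVec]
  field_simp
  rw [one_smul]
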